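/- arXiv:1401.3523 — 4 statements merged into one kernel-verified Lean document; each statement's English description precedes it below -/
import Mathlib

section
/- Let G be a totally disconnected locally compact group, φ : G → G a topological automorphism, and U an open compact subgroup. For n ≥ 1 let Cₙ(φ,U) = ⋂_{i=0}^{n-1} φ^{-i}(U) and αₙ = [Cₙ(φ,U) : C_{n+1}(φ,U)]. Then α_{n+1} ≤ αₙ for every n ≥ 1; consequently the sequence (αₙ) is eventually constant. -/
open Filter Topology

variable {G : Type*} [Group G]

/-- The `n`-th `φ`-cotrajectory `Cₙ(φ,U) = ⋂_{i<n} φ^{-i}(U)`. -/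
def cotrajN (φ : MulAut G) (U : Subgroup G) (n : ℕ) : Subgroup G :=
  ⨅ i ∈ Finset.range n, Subgroup.comap (φ ^ i).toMonoidHom U

lemma cotrajN_mem (φ : MulAut G) (U : Subgroup G) (n : ℕ) (x : G) :
    x ∈ cotrajN φ U n ↔ ∀ i < n, (φ ^ i) x ∈ U := by
  simp [cotrajN, Subgroup.mem_iInf, Subgroup.mem_comap]

lemma cotrajN_succ (φ : MulAut G) (U : Subgroup G) (n : ℕ) :
    cotrajN φ U (n + 1) = U ⊓ (cotrajN φ U n).comap φ.toMonoidHom := by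
  ext x
  simp only [cotrajN_mem, Subgroup.mem_inf, Subgroup.mem_comap, MulEquiv.coe_toMonoidHom]
  constructor
  · intro h
    refine ⟨by simpa using h 0 n.succ_pos, fun i hi => ?_⟩
    have := h (i + 1) (by omega)
    rwa [pow_succ, MulAut.mul_apply] at this
  · rintro ⟨h0, h⟩ i hi
    cases i with
    | zero => simpa using h0
    | succ i =>
      rw [pow_succ, MulAut.mul_apply]
      exact h i (by omega)

lemma cotrajN_le_U (φ : MulAut G) (U : Subgroup G) (n : ℕ) (hn : 1 ≤ n) :
    cotrajN φ U n ≤ U := by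
  intro x hx
  have := (cotrajN_mem φ U n x).mp hx 0 hn
  simpa using this

lemma continuous_mulAut_pow [TopologicalSpace G] (φ : MulAut G) (hφ : Continuous φ)
    (i : ℕ) : Continuous ⇑(φ ^ i : MulAut G) := by
  induction i with
  | zero => simpa using continuous_id
  | succ i ih =>
    have : ⇑(φ ^ (i + 1) : MulAut G) = ⇑(φ ^ i : MulAut G) ∘ ⇑φ := by
      ext x; rw [pow_succ, MulAut.mul_apply]; rfl
    rw [this]
    exact ih.comp hφ

lemma cotrajN_isOpen [TopologicalSpace G] (φ : MulAut G) (hφ : Continuous φ)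
    (U : Subgroup G) (hUo : IsOpen (U : Set G)) (n : ℕ) :
    IsOpen ((cotrajN φ U n : Set G)) := by
  have : (cotrajN φ U n : Set G) = ⋂ i ∈ Finset.range n, (⇑(φ ^ i : MulAut G)) ⁻¹' U := by
    simp [cotrajN]
  rw [this]
  exact isOpen_biInter_finset fun i _ => hUo.preimage (continuous_mulAut_pow φ hφ i)

theorem alpha_antitone_and_eventually_const [TopologicalSpace G] [IsTopologicalGroup G]
    [LocallyCompactSpace G] [TotallyDisconnectedSpace G]
    (φ : MulAut G) (hφ : Continuous φ) (hφ' : Continuous φ⁻¹)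
    (U : Subgroup G) (hUo : IsOpen (U : Set G)) (hUc : IsCompact (U : Set G))
    (α : ℕ → ℕ) (hα : ∀ n, α n = (cotrajN φ U (n + 1)).relIndex (cotrajN φ U n)) :
    (∀ n : ℕ, 1 ≤ n → α (n + 1) ≤ α n) ∧
      ∃ n₀ : ℕ, 1 ≤ n₀ ∧ ∃ a : ℕ, 0 < a ∧ ∀ n ≥ n₀, α n = a := by
  -- positivity of α n for n ≥ 1
  have hpos : ∀ n : ℕ, 1 ≤ n → α n ≠ 0 := by
    intro n hn
    rw [hα]
    set K := cotrajN φ U n with hK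
    have hKo : IsOpen (K : Set G) := cotrajN_isOpen φ hφ U hUo n
    have hKc : IsCompact (K : Set G) :=
      hUc.of_isClosed_subset (K.isClosed_of_isOpen hKo) (cotrajN_le_U φ U n hn)
    have : CompactSpace K := isCompact_iff_compactSpace.mp hKc
    have hopen : IsOpen (((cotrajN φ U (n + 1)).subgroupOf K : Set K)) := by
      have : ((cotrajN φ U (n + 1)).subgroupOf K : Set K)
          = (Subtype.val : K → G) ⁻¹' (cotrajN φ U (n + 1)) := by
        rw [Subgroup.subgroupOf, Subgroup.coe_comap, Subgroup.coe_subtype]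
      rw [this]
      exact (cotrajN_isOpen φ hφ U hUo (n + 1)).preimage continuous_subtype_val
    have fin : Finite (K ⧸ (cotrajN φ U (n + 1)).subgroupOf K) :=
      Subgroup.quotient_finite_of_isOpen _ hopen
    exact Subgroup.index_ne_zero_of_finite
  -- the antitone inequality
  have hanti : ∀ n : ℕ, 1 ≤ n → α (n + 1) ≤ α n := by
    intro n hn
    set A := (cotrajN φ U (n + 1)).comap φ.toMonoidHom with hA
    set B := (cotrajN φ U n).comap φ.toMonoidHom with hB
    have hAB : A.relIndex B = α n := by
      rw [hA, hB, Subgroup.relIndex_comap,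
        Subgroup.map_comap_eq_self_of_surjective φ.surjective, hα]
    have hle : cotrajN φ U (n + 1) ≤ B := by
      rw [cotrajN_succ]; exact inf_le_right
    have hleU : cotrajN φ U (n + 1) ≤ U := cotrajN_le_U φ U (n + 1) (by omega)
    calc α (n + 1) = (cotrajN φ U (n + 2)).relIndex (cotrajN φ U (n + 1)) := hα (n + 1)
      _ = (U ⊓ A).relIndex (cotrajN φ U (n + 1)) := by rw [cotrajN_succ]
      _ = A.relIndex (cotrajN φ U (n + 1)) := by
          rw [← Subgroup.inf_relIndex_right, inf_assoc,
            inf_eq_right.mpr (le_trans inf_le_right hleU),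
            Subgroup.inf_relIndex_right]
      _ ≤ A.relIndex B :=
          Subgroup.relIndex_le_of_le_right hle (by rw [hAB]; exact hpos n hn)
      _ = α n := hAB
  refine ⟨hanti, ?_⟩
  -- eventual constancy of the antitone positive sequence β k = α (k+1)
  set β : ℕ → ℕ := fun k => α (k + 1) with hβ
  have hβanti : Antitone β := antitone_nat_of_succ_le fun k => hanti (k + 1) (by omega)
  obtain ⟨k₀, hk₀⟩ := Nat.sInf_mem (Set.range_nonempty β)
  refine ⟨k₀ + 1, by omega, sInf (Set.range β), ?_, ?_⟩
  · have : β k₀ ≠ 0 := hpos (k₀ + 1) (by omega)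
    omega
  · intro n hn
    obtain ⟨k, rfl⟩ : ∃ k, n = k + 1 := ⟨n - 1, by omega⟩
    exact le_antisymm (hk₀ ▸ hβanti (by omega : k₀ ≤ k)) (Nat.sInf_le ⟨k, rfl⟩)
end

section
/- Let G be a totally disconnected locally compact group, φ : G → G a topological automorphism, and U an open compact subgroup of G. Let C(φ⁻¹,U) = ⋂_{n=0}^∞ φⁿ(U) be the cotrajectory of U under φ⁻¹. Then H_top(φ,U) = log [φ(C(φ⁻¹,U)) : C(φ⁻¹,U)], where the index counts cosets of C(φ⁻¹,U) meeting φ(C(φ⁻¹,U)). -/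
open Filter Topology

variable {G : Type*} [Group G]

/-- `cₙ = [U : Cₙ(φ,U)]`. -/
noncomputable def entIdx (φ : MulAut G) (U : Subgroup G) (n : ℕ) : ℕ :=
  (cotrajN φ U n).relIndex U

/-- The topological entropy of `φ` with respect to `U`,
`H_top(φ,U) = lim_n log cₙ / n` (the limit exists, so it equals the `limsup`). -/
noncomputable def Htop (φ : MulAut G) (U : Subgroup G) : ℝ :=
  limsup (fun n : ℕ => Real.log (entIdx φ U n) / n) atTop

/-- The `φ`-cotrajectory `C(φ,U) = ⋂_{n≥0} φ^{-n}(U)`; note `C(φ⁻¹,U) = ⋂_{n≥0} φ^n(U)`. -/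
def cotraj (φ : MulAut G) (U : Subgroup G) : Subgroup G :=
  ⨅ n : ℕ, Subgroup.comap (φ ^ n).toMonoidHom U

open Pointwise Subgroup

/-- recursive version of cotrajN -/
def Dr (ψ : MulAut G) (U : Subgroup G) : ℕ → Subgroup G
  | 0 => ⊤
  | n+1 => U ⊓ Subgroup.comap ψ.toMonoidHom (Dr ψ U n)

lemma pow_toMonoidHom_succ (ψ : MulAut G) (n : ℕ) :
    ((ψ ^ (n+1)).toMonoidHom : G →* G) = (ψ ^ n).toMonoidHom.comp ψ.toMonoidHom := by
  ext x; simp [pow_succ]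

lemma pow_toMonoidHom_succ' (ψ : MulAut G) (n : ℕ) :
    ((ψ ^ (n+1)).toMonoidHom : G →* G) = ψ.toMonoidHom.comp (ψ ^ n).toMonoidHom := by
  ext x; simp [pow_succ']

lemma comap_pow_zero (ψ : MulAut G) (U : Subgroup G) :
    Subgroup.comap ((ψ ^ 0).toMonoidHom) U = U := by
  have : ((ψ ^ 0).toMonoidHom : G →* G) = MonoidHom.id G := by ext x; simp
  rw [this, Subgroup.comap_id]

lemma comap_pow_succ (ψ : MulAut G) (U : Subgroup G) (n : ℕ) :
    Subgroup.comap ((ψ ^ (n+1)).toMonoidHom) U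
      = Subgroup.comap ψ.toMonoidHom (Subgroup.comap ((ψ ^ n).toMonoidHom) U) := by
  rw [Subgroup.comap_comap, ← pow_toMonoidHom_succ]

lemma Dr_succ' (ψ : MulAut G) (U : Subgroup G) (n : ℕ) :
    Dr ψ U (n+1) = Dr ψ U n ⊓ Subgroup.comap ((ψ ^ n).toMonoidHom) U := by
  induction n with
  | zero =>
    show U ⊓ Subgroup.comap ψ.toMonoidHom ⊤ = ⊤ ⊓ Subgroup.comap ((ψ ^ 0).toMonoidHom) U
    rw [comap_pow_zero, Subgroup.comap_top, inf_top_eq, top_inf_eq]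
  | succ n ih =>
    calc Dr ψ U (n+2) = U ⊓ Subgroup.comap ψ.toMonoidHom
          (Dr ψ U n ⊓ Subgroup.comap ((ψ ^ n).toMonoidHom) U) := by
            rw [show Dr ψ U (n+2) = U ⊓ Subgroup.comap ψ.toMonoidHom (Dr ψ U (n+1)) from rfl, ih]
    _ = (U ⊓ Subgroup.comap ψ.toMonoidHom (Dr ψ U n))
          ⊓ Subgroup.comap ψ.toMonoidHom (Subgroup.comap ((ψ ^ n).toMonoidHom) U) := by
            rw [Subgroup.comap_inf, inf_assoc]
    _ = Dr ψ U (n+1) ⊓ Subgroup.comap ((ψ ^ (n+1)).toMonoidHom) U := by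
            rw [comap_pow_succ]; rfl

lemma cotrajN_eq_Dr (ψ : MulAut G) (U : Subgroup G) (n : ℕ) :
    cotrajN ψ U n = Dr ψ U n := by
  induction n with
  | zero => simp [cotrajN, Dr]
  | succ n ih =>
    rw [Dr_succ', ← ih, cotrajN, cotrajN, Finset.range_add_one, Finset.iInf_insert, inf_comm]

lemma Dr_antitone (ψ : MulAut G) (U : Subgroup G) : Antitone (Dr ψ U) := by
  refine antitone_nat_of_succ_le fun n => ?_
  rw [Dr_succ']; exact inf_le_left

lemma Dr_le_U (ψ : MulAut G) (U : Subgroup G) (n : ℕ) : Dr ψ U (n+1) ≤ U := inf_le_left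

lemma cotraj_le_Dr (ψ : MulAut G) (U : Subgroup G) (n : ℕ) : cotraj ψ U ≤ Dr ψ U n := by
  induction n with
  | zero => exact le_top
  | succ n ih =>
    refine le_inf ?_ ?_
    · have := iInf_le (fun n => Subgroup.comap ((ψ ^ n).toMonoidHom) U) 0
      rwa [comap_pow_zero] at this
    · have h1 : cotraj ψ U ≤ Subgroup.comap ψ.toMonoidHom (cotraj ψ U) := by
        rw [cotraj, Subgroup.comap_iInf]
        refine le_iInf fun n => ?_
        rw [← comap_pow_succ]
        exact iInf_le _ (n+1)
      exact h1.trans (Subgroup.comap_mono ih)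

lemma cotraj_eq_iInf_Dr (ψ : MulAut G) (U : Subgroup G) :
    cotraj ψ U = ⨅ n, Dr ψ U n := by
  refine le_antisymm (le_iInf (cotraj_le_Dr ψ U)) (le_iInf fun n => ?_)
  calc ⨅ n, Dr ψ U n ≤ Dr ψ U (n+1) := iInf_le _ _
  _ ≤ _ := by rw [Dr_succ']; exact inf_le_right

lemma map_eq_comap_inv (σ : MulAut G) (X : Subgroup G) :
    Subgroup.map σ.toMonoidHom X = Subgroup.comap (σ⁻¹).toMonoidHom X := by
  rw [Subgroup.map_equiv_eq_comap_symm']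
  rfl

lemma comap_inv_pow_eq_map_pow (φ : MulAut G) (X : Subgroup G) (n : ℕ) :
    Subgroup.comap ((φ⁻¹ ^ n).toMonoidHom) X = Subgroup.map ((φ ^ n)).toMonoidHom X := by
  rw [map_eq_comap_inv, inv_pow]

lemma map_pow_succ (φ : MulAut G) (X : Subgroup G) (n : ℕ) :
    Subgroup.map ((φ ^ (n+1)).toMonoidHom) X
      = Subgroup.map ((φ ^ n).toMonoidHom) (Subgroup.map φ.toMonoidHom X) := by
  rw [Subgroup.map_map, ← pow_toMonoidHom_succ]

lemma map_pow_succ' (φ : MulAut G) (X : Subgroup G) (n : ℕ) :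
    Subgroup.map ((φ ^ (n+1)).toMonoidHom) X
      = Subgroup.map φ.toMonoidHom (Subgroup.map ((φ ^ n).toMonoidHom) X) := by
  rw [Subgroup.map_map, ← pow_toMonoidHom_succ']

/-- `φ^n (Cₙ₊₁(φ,U)) = Cₙ₊₁(φ⁻¹,U)` -/
lemma map_pow_Dr (φ : MulAut G) (U : Subgroup G) (n : ℕ) :
    Subgroup.map ((φ ^ n).toMonoidHom) (Dr φ U (n+1)) = Dr φ⁻¹ U (n+1) := by
  induction n with
  | zero =>
    have h0 : ((φ ^ 0).toMonoidHom : G →* G) = MonoidHom.id G := by ext x; simp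
    show Subgroup.map _ (U ⊓ Subgroup.comap φ.toMonoidHom ⊤) = U ⊓ Subgroup.comap (φ⁻¹).toMonoidHom ⊤
    rw [h0, Subgroup.map_id, Subgroup.comap_top, Subgroup.comap_top]
  | succ n ih =>
    have hinj : Function.Injective ((φ ^ (n+1)).toMonoidHom : G →* G) := (φ ^ (n+1)).injective
    calc Subgroup.map ((φ ^ (n+1)).toMonoidHom) (Dr φ U (n+2))
        = Subgroup.map ((φ ^ (n+1)).toMonoidHom) U
            ⊓ Subgroup.map ((φ ^ (n+1)).toMonoidHom) (Subgroup.comap φ.toMonoidHom (Dr φ U (n+1))) := by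
          rw [show Dr φ U (n+2) = U ⊓ Subgroup.comap φ.toMonoidHom (Dr φ U (n+1)) from rfl,
            Subgroup.map_inf _ _ _ hinj]
      _ = Subgroup.map ((φ ^ (n+1)).toMonoidHom) U ⊓ Dr φ⁻¹ U (n+1) := by
          rw [show Subgroup.map ((φ ^ (n+1)).toMonoidHom)
              (Subgroup.comap φ.toMonoidHom (Dr φ U (n+1))) = Dr φ⁻¹ U (n+1) from by
            rw [map_pow_succ, Subgroup.map_comap_eq_self_of_surjective φ.surjective, ih]]
      _ = Dr φ⁻¹ U (n+2) := by
          rw [Dr_succ' φ⁻¹ U (n+1), comap_inv_pow_eq_map_pow, inf_comm]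

/-- the increment `aₘ = [φ(Dₘ) : φ(Dₘ) ∩ U]` -/
noncomputable def aIdx (φ : MulAut G) (U : Subgroup G) (m : ℕ) : ℕ :=
  U.relIndex (Subgroup.map φ.toMonoidHom (Dr φ⁻¹ U m))

lemma entIdx_one (φ : MulAut G) (U : Subgroup G) : entIdx φ U 1 = 1 := by
  rw [entIdx, cotrajN_eq_Dr]
  show (U ⊓ Subgroup.comap φ.toMonoidHom ⊤).relIndex U = 1
  rw [Subgroup.comap_top, inf_top_eq, Subgroup.relIndex_self]

lemma entIdx_rec (φ : MulAut G) (U : Subgroup G) (n : ℕ) :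
    entIdx φ U (n+2) = aIdx φ U (n+1) * entIdx φ U (n+1) := by
  have h1 : Dr φ U (n+2) ≤ Dr φ U (n+1) := Dr_antitone φ U (Nat.le_succ _)
  have h2 : Dr φ U (n+1) ≤ U := Dr_le_U φ U n
  have key : (Dr φ U (n+2)).relIndex (Dr φ U (n+1)) = aIdx φ U (n+1) := by
    rw [Dr_succ' φ U (n+1), inf_comm, Subgroup.inf_relIndex_right, Subgroup.relIndex_comap,
      aIdx, map_pow_succ', map_pow_Dr]
  rw [entIdx, entIdx, cotrajN_eq_Dr, cotrajN_eq_Dr,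
    ← Subgroup.relIndex_mul_relIndex _ _ U h1 h2, key]

/-- Lemma B: finiteness of relative index of an open subgroup in a compact one. -/
lemma relindex_ne_zero_of_isOpen_of_isCompact [TopologicalSpace G] [IsTopologicalGroup G]
    {V K : Subgroup G} (hV : IsOpen (V : Set G)) (hK : IsCompact (K : Set G)) :
    V.relIndex K ≠ 0 := by
  have hcov : (K : Set G) ⊆ ⋃ x ∈ (K : Set G), x • (V : Set G) := by
    intro k hk
    exact Set.mem_biUnion hk ⟨1, V.one_mem, by simp⟩
  obtain ⟨t, hts, htfin, hcover⟩ := hK.elim_finite_subcover_image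
    (fun x _ => hV.smul x) hcov
  haveI : Finite ↥t := htfin.to_subtype
  have hsurj : Function.Surjective
      (fun x : t => (QuotientGroup.mk ⟨x.1, hts x.2⟩ : K ⧸ V.subgroupOf K)) := by
    intro q
    induction q using QuotientGroup.induction_on with
    | H k =>
      obtain ⟨x, hxt, hkx⟩ := Set.mem_iUnion₂.mp (hcover k.2)
      refine ⟨⟨x, hxt⟩, ?_⟩
      refine (QuotientGroup.eq).mpr ?_
      rw [Subgroup.mem_subgroupOf]
      obtain ⟨v, hv, hxv⟩ := hkx
      show ((⟨x, hts hxt⟩ : K) : G)⁻¹ * (k : G) ∈ V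
      have : (k : G) = x * v := by
        simpa [eq_comm] using hxv
      rw [this]
      simpa using hv
  haveI : Finite (K ⧸ V.subgroupOf K) := Finite.of_surjective _ hsurj
  have : Nat.card (K ⧸ V.subgroupOf K) ≠ 0 := Nat.card_ne_zero.mpr ⟨⟨QuotientGroup.mk 1⟩, inferInstance⟩
  simpa [Subgroup.relIndex, Subgroup.index] using this

/-- Lemma A: if `K ⊆ H * V` with `H ≤ K`, then `[K : V ∩ K] ≤ [H : V ∩ H]`. -/
lemma relindex_le_of_mul_cover {H K V : Subgroup G} (hHK : H ≤ K)
    (hcov : (K : Set G) ⊆ (H : Set G) * (V : Set G))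
    (hfin : V.relIndex H ≠ 0) : V.relIndex K ≤ V.relIndex H := by
  haveI : Finite (H ⧸ V.subgroupOf H) := by
    rw [Subgroup.relIndex, Subgroup.index] at hfin
    exact Nat.finite_of_card_ne_zero hfin
  set F : H ⧸ V.subgroupOf H → K ⧸ V.subgroupOf K :=
    Quotient.map' (fun h => ⟨h.1, hHK h.2⟩)
      (by
        intro a b hab
        rw [QuotientGroup.leftRel_apply] at hab ⊢
        rw [Subgroup.mem_subgroupOf] at hab ⊢
        exact hab) with hF
  have hsurj : Function.Surjective F := by
    intro q
    induction q using QuotientGroup.induction_on with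
    | H k =>
      obtain ⟨h, hh, v, hv, hkv⟩ := hcov k.2
      refine ⟨QuotientGroup.mk ⟨h, hh⟩, ?_⟩
      show QuotientGroup.mk _ = _
      refine (QuotientGroup.eq).mpr ?_
      rw [Subgroup.mem_subgroupOf]
      show h⁻¹ * (k : G) ∈ V
      rw [← hkv]
      simpa using hv
  have := Nat.card_le_card_of_surjective F hsurj
  simpa [Subgroup.relIndex, Subgroup.index] using this

lemma cotraj_le_comap (ψ : MulAut G) (U : Subgroup G) :
    cotraj ψ U ≤ Subgroup.comap ψ.toMonoidHom (cotraj ψ U) := by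
  rw [cotraj, Subgroup.comap_iInf]
  refine le_iInf fun n => ?_
  rw [← comap_pow_succ]
  exact iInf_le _ (n+1)

lemma cotraj_le_self (ψ : MulAut G) (U : Subgroup G) : cotraj ψ U ≤ U := by
  have := iInf_le (fun n => Subgroup.comap ((ψ ^ n).toMonoidHom) U) 0
  rwa [comap_pow_zero] at this

lemma cotraj_eq_inf (ψ : MulAut G) (U : Subgroup G) :
    cotraj ψ U = U ⊓ Subgroup.comap ψ.toMonoidHom (cotraj ψ U) := by
  refine le_antisymm (le_inf (cotraj_le_self ψ U) (cotraj_le_comap ψ U)) (le_iInf fun n => ?_)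
  match n with
  | 0 => rw [comap_pow_zero]; exact inf_le_left
  | n+1 =>
    rw [comap_pow_succ]
    exact inf_le_right.trans (Subgroup.comap_mono (iInf_le _ n))

lemma cotraj_eq_iInf_Dr_succ (ψ : MulAut G) (U : Subgroup G) :
    cotraj ψ U = ⨅ n, Dr ψ U (n+1) := by
  refine le_antisymm (le_iInf fun n => cotraj_le_Dr ψ U (n+1)) ?_
  rw [cotraj_eq_iInf_Dr]
  refine le_iInf fun n => ?_
  match n with
  | 0 => exact le_top
  | n+1 => exact iInf_le _ n

section Top
variable [TopologicalSpace G] [IsTopologicalGroup G]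

lemma Dr_isClosed (ψ : MulAut G) {U : Subgroup G} (hU : IsOpen (U : Set G))
    (hψ : Continuous ψ) (n : ℕ) : IsClosed (Dr ψ U n : Set G) := by
  induction n with
  | zero => show IsClosed ((⊤ : Subgroup G) : Set G); rw [Subgroup.coe_top]; exact isClosed_univ
  | succ n ih =>
    show IsClosed ((U ⊓ Subgroup.comap ψ.toMonoidHom (Dr ψ U n) : Subgroup G) : Set G)
    rw [Subgroup.coe_inf, Subgroup.coe_comap]
    exact (Subgroup.isClosed_of_isOpen U hU).inter (ih.preimage hψ)

end Top

lemma DrInv_closed_compact [TopologicalSpace G] [IsTopologicalGroup G] [T2Space G]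
    (φ : MulAut G) {U : Subgroup G} (hUo : IsOpen (U : Set G)) (hUc : IsCompact (U : Set G))
    (hφ : Continuous φ) (n : ℕ) :
    IsClosed (Dr φ⁻¹ U (n+1) : Set G) ∧ IsCompact (Dr φ⁻¹ U (n+1) : Set G) := by
  induction n with
  | zero =>
    have h1 : Dr φ⁻¹ U 1 = U := by
      show U ⊓ Subgroup.comap _ ⊤ = U
      rw [Subgroup.comap_top, inf_top_eq]
    rw [h1]
    exact ⟨Subgroup.isClosed_of_isOpen U hUo, hUc⟩
  | succ n ih =>
    have h2 : Dr φ⁻¹ U (n+2) = U ⊓ Subgroup.map φ.toMonoidHom (Dr φ⁻¹ U (n+1)) := by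
      show U ⊓ Subgroup.comap (φ⁻¹).toMonoidHom (Dr φ⁻¹ U (n+1)) = _
      rw [map_eq_comap_inv]
    have himg : IsCompact ((Subgroup.map φ.toMonoidHom (Dr φ⁻¹ U (n+1))) : Set G) := by
      rw [Subgroup.coe_map]; exact ih.2.image hφ
    have hcl : IsClosed ((U ⊓ Subgroup.map φ.toMonoidHom (Dr φ⁻¹ U (n+1)) : Subgroup G) : Set G) := by
      rw [Subgroup.coe_inf]
      exact (Subgroup.isClosed_of_isOpen U hUo).inter himg.isClosed
    rw [h2]
    refine ⟨hcl, hUc.of_isClosed_subset hcl ?_⟩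
    rw [Subgroup.coe_inf]
    exact Set.inter_subset_left

theorem limit_free_formula [TopologicalSpace G] [IsTopologicalGroup G]
    [LocallyCompactSpace G] [TotallyDisconnectedSpace G]
    (φ : MulAut G) (hφ : Continuous φ) (hφ' : Continuous φ⁻¹)
    (U : Subgroup G) (hUo : IsOpen (U : Set G)) (hUc : IsCompact (U : Set G)) :
    Htop φ U =
      Real.log ((cotraj φ⁻¹ U).relIndex (Subgroup.map φ.toMonoidHom (cotraj φ⁻¹ U))) := by
  haveI : T2Space G := IsTopologicalGroup.t2Space_iff_one_closed.mpr
    (by rw [← connectedComponent_eq_singleton (1 : G)]; exact isClosed_connectedComponent)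
  set C : Subgroup G := cotraj φ⁻¹ U with hC
  set D : ℕ → Subgroup G := Dr φ⁻¹ U with hD
  set α : ℕ := U.relIndex (Subgroup.map φ.toMonoidHom C) with hα
  -- closedness and compactness
  have hDcc := DrInv_closed_compact φ hUo hUc hφ
  have hDclosed : ∀ n, IsClosed (D n : Set G) := by
    intro n
    match n with
    | 0 => show IsClosed ((⊤ : Subgroup G) : Set G); rw [Subgroup.coe_top]; exact isClosed_univ
    | n+1 => exact (hDcc n).1
  have hDcomp : ∀ n, IsCompact (D (n+1) : Set G) := fun n => (hDcc n).2
  have hmapDcomp : ∀ n, IsCompact ((Subgroup.map φ.toMonoidHom (D (n+1))) : Set G) := by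
    intro n; rw [Subgroup.coe_map]; exact (hDcomp n).image hφ
  have hCleD : ∀ n, C ≤ D n := cotraj_le_Dr φ⁻¹ U
  have hCclosed : IsClosed (C : Set G) := by
    have h : (C : Set G) = ⋂ n, (D n : Set G) := by
      rw [hC, cotraj_eq_iInf_Dr, Subgroup.coe_iInf]
    rw [h]
    exact isClosed_iInter fun n => hDclosed n
  have hCcomp : IsCompact (C : Set G) :=
    hUc.of_isClosed_subset hCclosed (cotraj_le_self φ⁻¹ U)
  have hmapCcomp : IsCompact ((Subgroup.map φ.toMonoidHom C) : Set G) := by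
    rw [Subgroup.coe_map]; exact hCcomp.image hφ
  -- finiteness of indices
  have ha_ne : ∀ n, aIdx φ U (n+1) ≠ 0 := fun n =>
    relindex_ne_zero_of_isOpen_of_isCompact hUo (hmapDcomp n)
  have hα_ne : α ≠ 0 := relindex_ne_zero_of_isOpen_of_isCompact hUo hmapCcomp
  -- lower bound α ≤ aₙ
  have hαle : ∀ n, α ≤ aIdx φ U (n+1) := fun n =>
    Subgroup.relIndex_le_of_le_right (Subgroup.map_mono (hCleD (n+1))) (ha_ne n)
  -- the cover stabilization
  set S : Set G := (Subgroup.map φ.toMonoidHom C : Set G) * (U : Set G) with hS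
  have hSopen : IsOpen S := hUo.mul_left
  have hmapC_eq : Subgroup.map φ.toMonoidHom C = ⨅ n, Subgroup.map φ.toMonoidHom (D (n+1)) := by
    simp only [map_eq_comap_inv]
    rw [hC, cotraj_eq_iInf_Dr_succ, Subgroup.comap_iInf]
  have hexists : ∃ n, (Subgroup.map φ.toMonoidHom (D (n+1)) : Set G) ⊆ S := by
    by_contra h
    push_neg at h
    have hne : ∀ n, ((Subgroup.map φ.toMonoidHom (D (n+1)) : Set G) \ S).Nonempty := by
      intro n
      exact Set.not_subset.mp (h n) |>.imp fun x hx => ⟨hx.1, hx.2⟩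
    have hdec : ∀ n, ((Subgroup.map φ.toMonoidHom (D (n+2)) : Set G) \ S)
        ⊆ ((Subgroup.map φ.toMonoidHom (D (n+1)) : Set G) \ S) := by
      intro n
      apply Set.diff_subset_diff_left
      exact SetLike.coe_subset_coe.mpr
        (Subgroup.map_mono (Dr_antitone φ⁻¹ U (Nat.le_succ (n+1))))
    have hcl : ∀ n, IsClosed ((Subgroup.map φ.toMonoidHom (D (n+1)) : Set G) \ S) :=
      fun n => ((hmapDcomp n).isClosed).sdiff hSopen
    obtain ⟨x, hx⟩ := IsCompact.nonempty_iInter_of_sequence_nonempty_isCompact_isClosed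
      (fun n => (Subgroup.map φ.toMonoidHom (D (n+1)) : Set G) \ S)
      hdec hne ((hmapDcomp 0).diff hSopen) hcl
    rw [Set.mem_iInter] at hx
    have hxC : x ∈ Subgroup.map φ.toMonoidHom C := by
      rw [hmapC_eq, Subgroup.mem_iInf]
      exact fun n => (hx n).1
    exact (hx 0).2 (by
      have : x * 1 ∈ S := Set.mul_mem_mul hxC U.one_mem
      simpa using this)
  obtain ⟨n₀, hn₀⟩ := hexists
  set N : ℕ := n₀ + 1 with hN
  -- for m ≥ N, aₘ = α
  have ha_eq : ∀ m, N ≤ m → aIdx φ U m = α := by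
    intro m hm
    obtain ⟨k, rfl⟩ : ∃ k, m = k + 1 := ⟨m - 1, by omega⟩
    refine le_antisymm ?_ (hαle k)
    refine relindex_le_of_mul_cover (Subgroup.map_mono (hCleD (k+1))) ?_ hα_ne
    refine Set.Subset.trans ?_ hn₀
    exact SetLike.coe_subset_coe.mpr
      (Subgroup.map_mono (Dr_antitone φ⁻¹ U (by omega : n₀ + 1 ≤ k + 1)))
  -- entIdx is nonzero
  have hent_ne : ∀ m, entIdx φ U (m+1) ≠ 0 := by
    intro m
    induction m with
    | zero => rw [entIdx_one]; exact one_ne_zero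
    | succ m ih => rw [entIdx_rec]; exact mul_ne_zero (ha_ne m) ih
  -- closed form
  have hclosed_form : ∀ k, entIdx φ U (N + 1 + k) = entIdx φ U (N + 1) * α ^ k := by
    intro k
    induction k with
    | zero => simp
    | succ k ih =>
      have h1 : N + 1 + (k + 1) = (N + k) + 2 := by omega
      have h2 : (N + k) + 1 = N + 1 + k := by omega
      rw [h1, entIdx_rec, ha_eq (N + k + 1) (by omega), h2, ih, pow_succ]
      ring
  -- the limit
  set L : ℝ := Real.log α with hL
  set e : ℝ := Real.log (entIdx φ U (N + 1)) with he
  have htendsto : Tendsto (fun n : ℕ => Real.log (entIdx φ U n) / n) atTop (𝓝 L) := by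
    have heq : (fun n : ℕ => Real.log (entIdx φ U n) / n)
        =ᶠ[atTop] (fun n : ℕ => (e - (N+1) * L) / n + L) := by
      filter_upwards [eventually_ge_atTop (N + 1)] with n hn
      have hform : entIdx φ U n = entIdx φ U (N + 1) * α ^ (n - (N + 1)) := by
        have := hclosed_form (n - (N + 1))
        rwa [show N + 1 + (n - (N + 1)) = n from by omega] at this
      have hne1 : ((entIdx φ U (N+1) : ℝ)) ≠ 0 := by
        exact_mod_cast hent_ne N
      have hne2 : ((α : ℝ)) ≠ 0 := by exact_mod_cast hα_ne
      have hlog : Real.log (entIdx φ U n) = e + ((n : ℝ) - (N + 1)) * L := by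
        rw [hform, Nat.cast_mul, Nat.cast_pow, Real.log_mul hne1 (pow_ne_zero _ hne2),
          Real.log_pow, he, hL]
        have hcast : ((n - (N + 1) : ℕ) : ℝ) = (n : ℝ) - (N + 1) := by
          rw [Nat.cast_sub hn]; push_cast; ring
        rw [hcast]
      have hnpos : ((n : ℝ)) ≠ 0 := by
        have : 0 < n := by omega
        positivity
      rw [hlog]
      field_simp
      ring
    refine Tendsto.congr' heq.symm ?_
    have h0 : Tendsto (fun n : ℕ => (e - (N+1) * L) / n) atTop (𝓝 0) :=
      tendsto_const_div_atTop_nhds_zero_nat _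
    have := h0.add_const L
    rwa [zero_add] at this
  have hHtop : Htop φ U = L := htendsto.limsup_eq
  rw [hHtop, hL, hα]
  congr 2
  -- finally : U.relindex (map φ C) = C.relindex (map φ C)
  obtain ⟨X, hX⟩ : ∃ X, Subgroup.map φ.toMonoidHom C = X := ⟨_, rfl⟩
  have hCinf : C = U ⊓ X := by
    rw [← hX, map_eq_comap_inv]
    exact cotraj_eq_inf φ⁻¹ U
  rw [hX]
  conv_rhs => rw [hCinf]
  rw [Subgroup.inf_relIndex_right]
end

section
/- Let G be a totally disconnected locally compact group, φ : G → G a topological automorphism, N a closed normal subgroup with φ(N) = N, q : G → G/N the projection, and φ̄ : G/N → G/N the induced automorphism. Then C(φ̄, q(U)) = q(C(φ,U)) for every open compact subgroup U of G containing N, and h_top(φ) ≥ h_top(φ̄). -/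
open Filter Topology

variable {G : Type*} [Group G]

/-- The topological entropy `h_top(φ) = sup {H_top(φ,U) : U open compact subgroup}`. -/
noncomputable def htop [TopologicalSpace G] (φ : MulAut G) : EReal :=
  ⨆ (U : Subgroup G) (_ : IsOpen (U : Set G) ∧ IsCompact (U : Set G)), ((Htop φ U : ℝ) : EReal)

section AuxMonQuot

open Set Pointwise

variable {H : Type*} [Group H]

lemma MonQuot.comap_one_eq (U : Subgroup H) :
    Subgroup.comap ((1 : MulAut H)).toMonoidHom U = U := by
  ext x; simp [Subgroup.mem_comap]

lemma MonQuot.cotrajN_zero (ψ : MulAut H) (U : Subgroup H) : cotrajN ψ U 0 = ⊤ := by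
  simp [cotrajN]

lemma MonQuot.cotrajN_succ (ψ : MulAut H) (U : Subgroup H) (n : ℕ) :
    cotrajN ψ U (n+1) = cotrajN ψ U n ⊓ Subgroup.comap (ψ ^ n).toMonoidHom U := by
  rw [cotrajN, Finset.range_add_one, Finset.iInf_insert, cotrajN, inf_comm]

lemma MonQuot.cotrajN_le (ψ : MulAut H) (U : Subgroup H) {i n : ℕ} (h : i < n) :
    cotrajN ψ U n ≤ Subgroup.comap (ψ ^ i).toMonoidHom U :=
  biInf_le _ (Finset.mem_range.mpr h)

lemma MonQuot.cotrajN_le_self (ψ : MulAut H) (U : Subgroup H) {n : ℕ} (h : 0 < n) :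
    cotrajN ψ U n ≤ U := by
  have := MonQuot.cotrajN_le ψ U h
  rwa [pow_zero, MonQuot.comap_one_eq] at this

lemma MonQuot.cotrajN_one (ψ : MulAut H) (U : Subgroup H) : cotrajN ψ U 1 = U := by
  rw [MonQuot.cotrajN_succ, MonQuot.cotrajN_zero, top_inf_eq, pow_zero, MonQuot.comap_one_eq]

lemma MonQuot.cotrajN_mono (ψ : MulAut H) {U V : Subgroup H} (h : U ≤ V) (n : ℕ) :
    cotrajN ψ U n ≤ cotrajN ψ V n := by
  refine le_iInf fun i => le_iInf fun hi => ?_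
  exact (biInf_le _ hi).trans (Subgroup.comap_mono h)

lemma MonQuot.relindex_comap_mulAut (ψ : MulAut H) (A U : Subgroup H) :
    (Subgroup.comap ψ.toMonoidHom A).relIndex (Subgroup.comap ψ.toMonoidHom U)
      = A.relIndex U := by
  rw [Subgroup.relIndex_comap, Subgroup.map_comap_eq_self_of_surjective ψ.surjective]

lemma MonQuot.continuous_mulAut_pow [TopologicalSpace H] (ψ : MulAut H)
    (h : Continuous ψ) (n : ℕ) : Continuous ⇑(ψ ^ n) := by
  induction n with
  | zero => simpa [pow_zero] using continuous_id
  | succ n ih =>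
      have : ⇑(ψ ^ (n+1)) = ⇑ψ ∘ ⇑(ψ ^ n) := by
        funext x; simp [pow_succ', MulAut.mul_apply]
      rw [this]; exact h.comp ih

lemma MonQuot.isOpen_cotrajN [TopologicalSpace H] [IsTopologicalGroup H] (ψ : MulAut H)
    (hψ : Continuous ψ) {U : Subgroup H} (hU : IsOpen (U : Set H)) (n : ℕ) :
    IsOpen (cotrajN ψ U n : Set H) := by
  induction n with
  | zero => rw [MonQuot.cotrajN_zero]; exact isOpen_univ
  | succ n ih =>
      rw [MonQuot.cotrajN_succ, Subgroup.coe_inf]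
      exact ih.inter (hU.preimage (MonQuot.continuous_mulAut_pow ψ hψ n))

lemma MonQuot.relindex_ne_zero [TopologicalSpace H] [IsTopologicalGroup H]
    {K U : Subgroup H} (hK : IsOpen (K : Set H)) (hU : IsCompact (U : Set H)) :
    K.relIndex U ≠ 0 := by
  have : CompactSpace U := isCompact_iff_compactSpace.mp hU
  have hopen : IsOpen ((K.subgroupOf U : Subgroup U) : Set U) :=
    hK.preimage continuous_subtype_val
  have : Finite (U ⧸ K.subgroupOf U) := Subgroup.quotient_finite_of_isOpen _ hopen
  exact Subgroup.index_ne_zero_of_finite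

lemma MonQuot.entIdx_ne_zero [TopologicalSpace H] [IsTopologicalGroup H] (ψ : MulAut H)
    (hψ : Continuous ψ) {U : Subgroup H}
    (hUo : IsOpen (U : Set H)) (hUc : IsCompact (U : Set H)) (n : ℕ) :
    entIdx ψ U n ≠ 0 :=
  MonQuot.relindex_ne_zero (MonQuot.isOpen_cotrajN ψ hψ hUo n) hUc

lemma MonQuot.entIdx_le_pow [TopologicalSpace H] [IsTopologicalGroup H] (ψ : MulAut H)
    (hψ : Continuous ψ) {U : Subgroup H}
    (hUo : IsOpen (U : Set H)) (hUc : IsCompact (U : Set H)) (n : ℕ) :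
    entIdx ψ U n ≤ ((Subgroup.comap ψ.toMonoidHom U).relIndex U) ^ n := by
  set k := (Subgroup.comap ψ.toMonoidHom U).relIndex U with hk
  have hk0 : k ≠ 0 := MonQuot.relindex_ne_zero (hUo.preimage hψ) hUc
  have hk1 : 1 ≤ k := Nat.one_le_iff_ne_zero.mpr hk0
  induction n with
  | zero => simp [entIdx, MonQuot.cotrajN_zero]
  | succ n ih =>
      rcases Nat.eq_zero_or_pos n with rfl | hn
      · simpa [entIdx, MonQuot.cotrajN_one, Subgroup.relIndex_self] using hk1
      · set C := cotrajN ψ U n with hC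
        set D := Subgroup.comap (ψ ^ n).toMonoidHom U with hD
        have hCU : C ≤ U := MonQuot.cotrajN_le_self ψ U hn
        obtain ⟨m, rfl⟩ : ∃ m, n = m + 1 := ⟨n - 1, (Nat.succ_pred_eq_of_pos hn).symm⟩
        set E := Subgroup.comap (ψ ^ m).toMonoidHom U with hE
        have hCE : C ≤ E := MonQuot.cotrajN_le ψ U (Nat.lt_succ_self m)
        have hDE : D.relIndex E = k := by
          rw [hD, hE, pow_succ']
          have : Subgroup.comap (ψ * ψ ^ m).toMonoidHom U
              = Subgroup.comap (ψ ^ m).toMonoidHom (Subgroup.comap ψ.toMonoidHom U) := rfl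
          rw [this, MonQuot.relindex_comap_mulAut]
        have hDE0 : D.relIndex E ≠ 0 := by rw [hDE]; exact hk0
        have step1 : entIdx ψ U (m + 1 + 1) = (C ⊓ D).relIndex C * C.relIndex U := by
          rw [entIdx, MonQuot.cotrajN_succ, ← hC, ← hD,
            Subgroup.relIndex_mul_relIndex _ _ _ inf_le_left hCU]
        have step2 : (C ⊓ D).relIndex C = D.relIndex C := by
          rw [inf_comm, Subgroup.inf_relIndex_right]
        have step3 : D.relIndex C ≤ k := by
          rw [← hDE]
          exact Subgroup.relIndex_le_of_le_right hCE hDE0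
        calc entIdx ψ U (m + 1 + 1) = (C ⊓ D).relIndex C * C.relIndex U := step1
          _ ≤ k * k ^ (m+1) := Nat.mul_le_mul (step2 ▸ step3) ih
          _ = k ^ (m+1+1) := by ring

/-- The entropy bound `log cₙ / n ≤ log k`. -/
lemma MonQuot.log_entIdx_div_le [TopologicalSpace H] [IsTopologicalGroup H] (ψ : MulAut H)
    (hψ : Continuous ψ) {U : Subgroup H}
    (hUo : IsOpen (U : Set H)) (hUc : IsCompact (U : Set H)) (n : ℕ) :
    Real.log (entIdx ψ U n) / n
      ≤ Real.log ((Subgroup.comap ψ.toMonoidHom U).relIndex U) := by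
  set k := (Subgroup.comap ψ.toMonoidHom U).relIndex U with hk
  have hlogk : 0 ≤ Real.log k := Real.log_natCast_nonneg k
  rcases Nat.eq_zero_or_pos n with rfl | hn
  · simpa using hlogk
  · have hc0 : 0 < (entIdx ψ U n : ℝ) := by
      exact_mod_cast Nat.pos_of_ne_zero (MonQuot.entIdx_ne_zero ψ hψ hUo hUc n)
    have hle : (entIdx ψ U n : ℝ) ≤ (k : ℝ) ^ n := by
      exact_mod_cast MonQuot.entIdx_le_pow ψ hψ hUo hUc n
    have h1 : Real.log (entIdx ψ U n) ≤ (n : ℝ) * Real.log k := by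
      calc Real.log (entIdx ψ U n) ≤ Real.log ((k : ℝ) ^ n) := Real.log_le_log hc0 hle
        _ = (n : ℝ) * Real.log k := Real.log_pow (k : ℝ) n
    have hn' : (0 : ℝ) < n := by exact_mod_cast hn
    rw [div_le_iff₀ hn']
    linarith [h1]

section VanDantzig

variable [TopologicalSpace H] [IsTopologicalGroup H]

lemma MonQuot.exist_mul_closure_nhd {W : Set H} (Wc : IsCompact W) (Wo : IsOpen W) :
    ∃ T ∈ 𝓝 (1 : H), W * T ⊆ W := by
  apply Wc.induction_on (p := fun S ↦ ∃ T ∈ 𝓝 (1 : H), S * T ⊆ W)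
    ⟨Set.univ, by simp only [univ_mem, empty_mul, empty_subset, and_self]⟩
    (fun _ _ huv ⟨T, hT, mem⟩ ↦ ⟨T, hT, (mul_subset_mul_right huv).trans mem⟩)
    fun U V ⟨T₁, hT₁, mem1⟩ ⟨T₂, hT₂, mem2⟩ ↦ ⟨T₁ ∩ T₂, inter_mem hT₁ hT₂, by
      rw [union_mul]
      exact union_subset (mul_subset_mul_left inter_subset_left |>.trans mem1)
        (mul_subset_mul_left inter_subset_right |>.trans mem2)⟩
  intro x memW
  have : (x, 1) ∈ (fun p : H × H ↦ p.1 * p.2) ⁻¹' W := by simp [memW]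
  rcases isOpen_prod_iff.mp (continuous_mul.isOpen_preimage W Wo) x 1 this with
    ⟨U, V, Uopen, Vopen, xmemU, onememV, prodsub⟩
  have h6 : U * V ⊆ W := mul_subset_iff.mpr (fun _ hx _ hy ↦ prodsub (mk_mem_prod hx hy))
  exact ⟨U ∩ W, ⟨U, Uopen.mem_nhds xmemU, W, fun _ a ↦ a, rfl⟩,
    V, IsOpen.mem_nhds Vopen onememV, fun _ a ↦ h6 ((mul_subset_mul_right inter_subset_left) a)⟩

lemma MonQuot.exists_mulInvClosureNhd {W : Set H} (Wc : IsCompact W) (Wo : IsOpen W) :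
    ∃ T, IsTopologicalGroup.mulInvClosureNhd T W := by
  rcases MonQuot.exist_mul_closure_nhd Wc Wo with ⟨S, Smemnhds, mulclose⟩
  rcases mem_nhds_iff.mp Smemnhds with ⟨U, UsubS, Uopen, onememU⟩
  exact ⟨U ∩ U⁻¹, by simp [Uopen.mem_nhds onememU, inv_mem_nhds_one],
    by simp [inter_comm], Uopen.inter Uopen.inv,
    fun a ha ↦ mulclose (mul_subset_mul_left UsubS (mul_subset_mul_left inter_subset_left ha))⟩

lemma MonQuot.exist_openSubgroup_sub {W : Set H} (Wc : IsCompact W) (Wo : IsOpen W)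
    (einW : (1 : H) ∈ W) :
    ∃ S : Subgroup H, IsOpen (S : Set H) ∧ (S : Set H) ⊆ W := by
  rcases MonQuot.exists_mulInvClosureNhd Wc Wo with ⟨V, hV⟩
  let S : Subgroup H := {
    carrier := ⋃ n, V ^ (n + 1)
    mul_mem' := fun ha hb ↦ by
      rcases mem_iUnion.mp ha with ⟨k, hk⟩
      rcases mem_iUnion.mp hb with ⟨l, hl⟩
      apply mem_iUnion.mpr
      use k + 1 + l
      rw [add_assoc, pow_add]
      exact Set.mul_mem_mul hk hl
    one_mem' := by
      apply mem_iUnion.mpr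
      use 0
      simp [mem_of_mem_nhds hV.nhds]
    inv_mem' := fun ha ↦ by
      rcases mem_iUnion.mp ha with ⟨k, hk⟩
      apply mem_iUnion.mpr
      use k
      rw [← hV.inv]
      simpa only [inv_pow, Set.mem_inv, inv_inv] using hk }
  have hSopen : IsOpen (⋃ n, V ^ (n + 1)) := by
    refine isOpen_iUnion (fun n ↦ ?_)
    rw [pow_succ]
    exact hV.isOpen.mul_left
  refine ⟨S, hSopen, ?_⟩
  have mulVpow (n : ℕ) : W * V ^ (n + 1) ⊆ W := by
    induction' n with n ih
    · simp [hV.mul]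
    · rw [pow_succ, ← mul_assoc]
      exact (Set.mul_subset_mul_right ih).trans hV.mul
  have (n : ℕ) : V ^ (n + 1) ⊆ W * V ^ (n + 1) := by
    intro x xin
    rw [Set.mem_mul]
    exact ⟨1, einW, x, xin, one_mul x⟩
  exact iUnion_subset fun i a hi ↦ mulVpow i (this i hi)

/-- van Dantzig's theorem: a totally disconnected locally compact group has a
compact open subgroup. -/
lemma MonQuot.exists_compact_open_subgroup (H : Type*) [Group H] [TopologicalSpace H]
    [IsTopologicalGroup H] [LocallyCompactSpace H] [TotallyDisconnectedSpace H] :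
    ∃ W : Subgroup H, IsOpen (W : Set H) ∧ IsCompact (W : Set H) := by
  obtain ⟨K, hKc, hKn⟩ := exists_compact_mem_nhds (1 : H)
  have h1 : (1 : H) ∈ interior K := mem_interior_iff_mem_nhds.mpr hKn
  obtain ⟨V, hVclopen, h1V, hVsub⟩ :=
    (loc_compact_Haus_tot_disc_of_zero_dim).mem_nhds_iff.mp
      (isOpen_interior.mem_nhds h1)
  have hVc : IsCompact V := hKc.of_isClosed_subset hVclopen.1 (hVsub.trans interior_subset)
  obtain ⟨S, hSopen, hSsub⟩ := MonQuot.exist_openSubgroup_sub hVc hVclopen.2 h1V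
  exact ⟨S, hSopen, hVc.of_isClosed_subset (Subgroup.isClosed_of_isOpen S hSopen) hSsub⟩

end VanDantzig

end AuxMonQuot

theorem monotonicity_quotient
    [TopologicalSpace G] [IsTopologicalGroup G] [LocallyCompactSpace G] [TotallyDisconnectedSpace G]
    (φ : MulAut G) (hφ : Continuous φ) (hφ' : Continuous φ⁻¹)
    (N : Subgroup G) [N.Normal] (hNc : IsClosed (N : Set G))
    (hNφ : Subgroup.map φ.toMonoidHom N = N)
    (φbar : MulAut (G ⧸ N))
    (hbar : ∀ g : G, φbar (QuotientGroup.mk g) = QuotientGroup.mk (φ g)) :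
    (∀ U : Subgroup G, IsOpen (U : Set G) → IsCompact (U : Set G) → N ≤ U →
        cotraj φbar (Subgroup.map (QuotientGroup.mk' N) U) =
          Subgroup.map (QuotientGroup.mk' N) (cotraj φ U)) ∧
      htop φbar ≤ htop φ := by
  -- preliminaries
  have hq_cont : Continuous (QuotientGroup.mk : G → G ⧸ N) := continuous_quot_mk
  have hbar_pow : ∀ (n : ℕ) (g : G),
      (φbar ^ n) (QuotientGroup.mk g) = QuotientGroup.mk ((φ ^ n) g) := by
    intro n
    induction n with
    | zero => intro g; simp
    | succ n ih =>
        intro g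
        rw [pow_succ', MulAut.mul_apply, ih, hbar, ← MulAut.mul_apply, ← pow_succ']
  have hbar_cont : Continuous ⇑φbar := by
    have hqm : IsQuotientMap (QuotientGroup.mk : G → G ⧸ N) :=
      QuotientGroup.isOpenMap_coe.isQuotientMap hq_cont Quotient.exists_rep
    rw [hqm.continuous_iff]
    have : (⇑φbar ∘ QuotientGroup.mk : G → G ⧸ N) = QuotientGroup.mk ∘ ⇑φ := by
      funext g; exact hbar g
    rw [this]
    exact hq_cont.comp hφ
  constructor
  · -- part (1)
    intro U hUo hUc hNU
    apply le_antisymm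
    · intro x hx
      have hx0 : x ∈ Subgroup.map (QuotientGroup.mk' N) U := by
        have h := Subgroup.mem_iInf.mp hx 0
        rw [Subgroup.mem_comap] at h
        simpa [pow_zero, MonQuot.comap_one_eq] using Subgroup.mem_iInf.mp hx 0
      obtain ⟨u, hu, rfl⟩ := hx0
      refine Subgroup.mem_map.mpr ⟨u, ?_, rfl⟩
      refine Subgroup.mem_iInf.mpr fun n => ?_
      rw [Subgroup.mem_comap]
      have hx' := Subgroup.mem_iInf.mp hx n
      rw [Subgroup.mem_comap] at hx'
      have heq : ((φbar ^ n).toMonoidHom) ((QuotientGroup.mk' N) u)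
          = QuotientGroup.mk ((φ ^ n) u) := hbar_pow n u
      rw [heq] at hx'
      obtain ⟨w, hw, hwq⟩ := Subgroup.mem_map.mp hx'
      have hmem : w⁻¹ * (φ ^ n) u ∈ N := QuotientGroup.eq.mp hwq
      have : (φ ^ n).toMonoidHom u = w * (w⁻¹ * (φ ^ n) u) := by
        rw [mul_inv_cancel_left]; rfl
      rw [this]
      exact U.mul_mem hw (hNU hmem)
    · unfold cotraj
      refine le_iInf fun n => Subgroup.map_le_iff_le_comap.mpr ?_
      intro g hg
      rw [Subgroup.mem_comap, Subgroup.mem_comap]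
      have heq : ((φbar ^ n).toMonoidHom) ((QuotientGroup.mk' N) g)
          = QuotientGroup.mk ((φ ^ n) g) := hbar_pow n g
      rw [heq]
      have hgU : (φ ^ n) g ∈ U := by
        have := Subgroup.mem_iInf.mp hg n
        rwa [Subgroup.mem_comap] at this
      exact Subgroup.mem_map.mpr ⟨(φ ^ n) g, hgU, rfl⟩
  · -- part (2)
    refine iSup₂_le fun V hV => ?_
    obtain ⟨hVo, hVc⟩ := hV
    -- construct a compact open subgroup U of G with q(U) ≤ V
    obtain ⟨W, hWo, hWc⟩ := MonQuot.exists_compact_open_subgroup G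
    set q : G →* G ⧸ N := QuotientGroup.mk' N with hq
    set U : Subgroup G := W ⊓ Subgroup.comap q V with hU
    have hUo : IsOpen (U : Set G) := by
      rw [hU, Subgroup.coe_inf]
      exact hWo.inter (hVo.preimage hq_cont)
    have hUc : IsCompact (U : Set G) :=
      hWc.of_isClosed_subset (Subgroup.isClosed_of_isOpen U hUo)
        (by rw [hU, Subgroup.coe_inf]; exact Set.inter_subset_left)
    set V₀ : Subgroup (G ⧸ N) := Subgroup.map q U with hV₀
    have hV₀o : IsOpen (V₀ : Set (G ⧸ N)) := by
      rw [hV₀, Subgroup.coe_map]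
      exact QuotientGroup.isOpenMap_coe _ hUo
    have hV₀V : V₀ ≤ V :=
      Subgroup.map_le_iff_le_comap.mpr inf_le_right
    -- the multiplicative error term
    set m : ℕ := V₀.relIndex V with hm
    have hm0 : m ≠ 0 := MonQuot.relindex_ne_zero hV₀o hVc
    -- key inequality
    have key : ∀ n : ℕ, 0 < n → entIdx φbar V n ≤ entIdx φ U n * m := by
      intro n hn
      have hCopen : IsOpen ((cotrajN φ U n : Subgroup G) : Set G) :=
        MonQuot.isOpen_cotrajN φ hφ hUo n
      set A : Subgroup (G ⧸ N) := Subgroup.map q (cotrajN φ U n) with hA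
      have hAopen : IsOpen (A : Set (G ⧸ N)) := by
        rw [hA, Subgroup.coe_map]
        exact QuotientGroup.isOpenMap_coe _ hCopen
      have hAV₀ : A ≤ V₀ :=
        Subgroup.map_mono (MonQuot.cotrajN_le_self φ U hn)
      have hAcot : A ≤ cotrajN φbar V₀ n := by
        rw [hA]
        unfold cotrajN
        refine le_iInf fun i => le_iInf fun hi => Subgroup.map_le_iff_le_comap.mpr ?_
        intro g hg
        rw [Subgroup.mem_comap, Subgroup.mem_comap]
        have heq : ((φbar ^ i).toMonoidHom) (q g) = QuotientGroup.mk ((φ ^ i) g) :=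
          hbar_pow i g
        rw [heq]
        have hgU : (φ ^ i) g ∈ U := by
          have := MonQuot.cotrajN_le φ U (Finset.mem_range.mp hi) hg
          rwa [Subgroup.mem_comap] at this
        exact Subgroup.mem_map.mpr ⟨(φ ^ i) g, hgU, rfl⟩
      have hle1 : A ≤ cotrajN φbar V n :=
        hAcot.trans (MonQuot.cotrajN_mono φbar hV₀V n)
      have hAV : A.relIndex V ≠ 0 := MonQuot.relindex_ne_zero hAopen hVc
      have step1 : entIdx φbar V n ≤ A.relIndex V :=
        Subgroup.relIndex_le_of_le_left hle1 hAV
      have step2 : A.relIndex V = A.relIndex V₀ * m :=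
        (Subgroup.relIndex_mul_relIndex A V₀ V hAV₀ hV₀V).symm
      have step3 : A.relIndex V₀ ≤ entIdx φ U n := by
        have hcomap : Subgroup.comap q A = cotrajN φ U n ⊔ N := by
          rw [hA, Subgroup.comap_map_eq, QuotientGroup.ker_mk']
        have h1 : A.relIndex V₀ = (cotrajN φ U n ⊔ N).relIndex U := by
          rw [hV₀, ← Subgroup.relIndex_comap, hcomap]
        rw [h1]
        exact Subgroup.relIndex_le_of_le_left le_sup_left
          (MonQuot.entIdx_ne_zero φ hφ hUo hUc n)
      calc entIdx φbar V n ≤ A.relIndex V := step1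
        _ = A.relIndex V₀ * m := step2
        _ ≤ entIdx φ U n * m := Nat.mul_le_mul_right m step3
    -- pass to real logarithms and limsups
    set u : ℕ → ℝ := fun n => Real.log (entIdx φbar V n) / n with hu
    set g : ℕ → ℝ := fun n => Real.log (entIdx φ U n) / n with hg
    have hu0 : ∀ n, 0 ≤ u n := fun n =>
      div_nonneg (Real.log_natCast_nonneg _) (Nat.cast_nonneg n)
    have hg0 : ∀ n, 0 ≤ g n := fun n =>
      div_nonneg (Real.log_natCast_nonneg _) (Nat.cast_nonneg n)
    set kR : ℝ := Real.log ((Subgroup.comap φ.toMonoidHom U).relIndex U) with hkR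
    have hgbd : ∀ n, g n ≤ kR := fun n => MonQuot.log_entIdx_div_le φ hφ hUo hUc n
    have hmain : Htop φbar V ≤ Htop φ U := by
      rw [Htop, Htop]
      refine le_of_forall_pos_le_add fun ε hε => ?_
      have htend : Tendsto (fun n : ℕ => Real.log m / n) atTop (𝓝 0) :=
        tendsto_const_div_atTop_nhds_zero_nat _
      have hev' : ∀ᶠ n : ℕ in atTop, Real.log m / n < ε :=
        htend.eventually_lt_const hε
      have hev : ∀ᶠ n : ℕ in atTop, u n ≤ g n + ε := by
        filter_upwards [eventually_ge_atTop 1, hev'] with n hn1 hnε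
        have hn : 0 < n := hn1
        have hc0 : 0 < (entIdx φbar V n : ℝ) := by
          exact_mod_cast Nat.pos_of_ne_zero (MonQuot.entIdx_ne_zero φbar hbar_cont hVo hVc n)
        have hce : (entIdx φbar V n : ℝ) ≤ (entIdx φ U n : ℝ) * m := by
          exact_mod_cast key n hn
        have hcU : (entIdx φ U n : ℝ) ≠ 0 := by
          exact_mod_cast MonQuot.entIdx_ne_zero φ hφ hUo hUc n
        have hmR : (m : ℝ) ≠ 0 := by exact_mod_cast hm0
        have hlog : Real.log (entIdx φbar V n)
            ≤ Real.log (entIdx φ U n) + Real.log m := by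
          calc Real.log (entIdx φbar V n) ≤ Real.log ((entIdx φ U n : ℝ) * m) :=
                Real.log_le_log hc0 hce
            _ = Real.log (entIdx φ U n) + Real.log m := Real.log_mul hcU hmR
        have hn' : (0 : ℝ) < n := by exact_mod_cast hn
        have : u n ≤ g n + Real.log m / n := by
          rw [hu, hg]
          dsimp only
          rw [← add_div]
          gcongr
        exact this.trans (by linarith [hnε.le])
      have hcob : atTop.IsCoboundedUnder (· ≤ ·) u :=
        (isBoundedUnder_of ⟨0, fun n => hu0 n⟩ :
          atTop.IsBoundedUnder (· ≥ ·) u).isCoboundedUnder_le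
      have hbddg : atTop.IsBoundedUnder (· ≤ ·) g :=
        isBoundedUnder_of ⟨kR, hgbd⟩
      have hcobg : atTop.IsCoboundedUnder (· ≤ ·) g :=
        (isBoundedUnder_of ⟨0, fun n => hg0 n⟩ :
          atTop.IsBoundedUnder (· ≥ ·) g).isCoboundedUnder_le
      have hbdd : atTop.IsBoundedUnder (· ≤ ·) fun n => g n + ε :=
        isBoundedUnder_of ⟨kR + ε, fun n => add_le_add_left (hgbd n) ε⟩
      calc limsup u atTop ≤ limsup (fun n => g n + ε) atTop :=
            limsup_le_limsup hev hcob hbdd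
        _ = limsup g atTop + ε := limsup_add_const atTop g ε hbddg hcobg
    -- conclude in `EReal`
    refine le_trans (EReal.coe_le_coe_iff.mpr hmain) ?_
    exact le_iSup_of_le U (le_iSup_of_le ⟨hUo, hUc⟩ le_rfl)
end

section
/- Let G and H be totally disconnected locally compact groups and φ : G → G, ψ : H → H topological automorphisms. Then h_top(φ × ψ) = h_top(φ) + h_top(ψ), where φ × ψ : G × H → G × H is the product automorphism. -/
open Filter Topology

variable {G : Type*} [Group G]

namespace EntropyAux

open Subgroup

section Basic

variable {φ : MulAut G} {U V : Subgroup G}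

lemma pow_succ_apply (φ : MulAut G) (i : ℕ) (x : G) : (φ ^ (i + 1)) x = (φ ^ i) (φ x) := by
  rw [pow_succ]; rfl

lemma mem_cotrajN {n : ℕ} {x : G} : x ∈ cotrajN φ U n ↔ ∀ i < n, (φ ^ i) x ∈ U := by
  simp [cotrajN, Subgroup.mem_iInf, Finset.mem_range]

lemma cotrajN_zero : cotrajN φ U 0 = ⊤ := by
  ext x; simp [mem_cotrajN]

lemma cotrajN_succ (n : ℕ) :
    cotrajN φ U (n + 1) = cotrajN φ U n ⊓ Subgroup.comap (φ ^ n).toMonoidHom U := by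
  ext x
  simp only [mem_cotrajN, Nat.forall_lt_succ_right, Subgroup.mem_inf, Subgroup.mem_comap,
    MulEquiv.coe_toMonoidHom]

lemma cotrajN_anti {m n : ℕ} (h : m ≤ n) : cotrajN φ U n ≤ cotrajN φ U m := by
  intro x hx
  exact mem_cotrajN.2 fun i hi => mem_cotrajN.1 hx i (lt_of_lt_of_le hi h)

lemma cotrajN_succ_le : cotrajN φ U (n + 1) ≤ U := by
  intro x hx
  simpa using mem_cotrajN.1 hx 0 (Nat.succ_pos n)

lemma cotrajN_mono_U (h : U ≤ V) (n : ℕ) : cotrajN φ U n ≤ cotrajN φ V n := by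
  intro x hx
  exact mem_cotrajN.2 fun i hi => h (mem_cotrajN.1 hx i hi)

lemma cotrajN_succ_comap (n : ℕ) :
    cotrajN φ U (n + 2) =
      Subgroup.comap φ.toMonoidHom (cotrajN φ U (n + 1)) ⊓ cotrajN φ U (n + 1) := by
  ext x
  simp only [Subgroup.mem_inf, mem_cotrajN, Subgroup.mem_comap, MulEquiv.coe_toMonoidHom]
  constructor
  · intro h
    refine ⟨fun i hi => ?_, fun i hi => h i (by omega)⟩
    rw [← pow_succ_apply]
    exact h (i + 1) (by omega)
  · rintro ⟨h1, h2⟩ i hi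
    match i with
    | 0 => exact h2 0 (by omega)
    | (j + 1) =>
      rw [pow_succ_apply]
      exact h1 j (by omega)

lemma map_cotrajN_le (n : ℕ) :
    Subgroup.map φ.toMonoidHom (cotrajN φ U (n + 2)) ≤ cotrajN φ U (n + 1) := by
  rintro y ⟨x, hx, rfl⟩
  refine mem_cotrajN.2 fun i hi => ?_
  have := mem_cotrajN.1 hx (i + 1) (by omega)
  rw [pow_succ_apply] at this
  simpa using this

end Basic

section Top

variable [TopologicalSpace G] [IsTopologicalGroup G]
variable {φ : MulAut G} {U : Subgroup G}

lemma continuous_pow (hφ : Continuous φ) (i : ℕ) : Continuous ⇑(φ ^ i) := by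
  induction i with
  | zero =>
      have : ⇑(φ ^ 0) = id := by ext x; simp
      rw [this]; exact continuous_id
  | succ n ih =>
      have : ⇑(φ ^ (n + 1)) = ⇑(φ ^ n) ∘ ⇑φ := by ext x; exact pow_succ_apply φ n x
      rw [this]; exact ih.comp hφ

lemma isOpen_cotrajN (hφ : Continuous φ) (hU : IsOpen (U : Set G)) (n : ℕ) :
    IsOpen ((cotrajN φ U n : Set G)) := by
  induction n with
  | zero => rw [cotrajN_zero]; simpa using isOpen_univ
  | succ n ih =>
      rw [cotrajN_succ]
      rw [Subgroup.coe_inf]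
      exact ih.inter (by rw [Subgroup.coe_comap]
                         exact hU.preimage (by simpa using continuous_pow hφ n))

lemma relIndex_ne_zero_aux {A B : Subgroup G} (hA : IsOpen (A : Set G))
    (hB : IsCompact (B : Set G)) : A.relIndex B ≠ 0 := by
  have : CompactSpace B := isCompact_iff_compactSpace.mp hB
  have hopen : IsOpen ((A.subgroupOf B : Subgroup B) : Set B) := by
    rw [Subgroup.subgroupOf, Subgroup.coe_comap]
    exact hA.preimage (by simpa using continuous_subtype_val)
  have : Finite (B ⧸ A.subgroupOf B) := Subgroup.quotient_finite_of_isOpen _ hopen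
  exact Subgroup.index_ne_zero_of_finite

lemma entIdx_ne_zero (hφ : Continuous φ) (hUo : IsOpen (U : Set G))
    (hUc : IsCompact (U : Set G)) (n : ℕ) : entIdx φ U n ≠ 0 :=
  relIndex_ne_zero_aux (isOpen_cotrajN hφ hUo n) hUc

/-- the step index `bₙ = [Cₙ₊₁ : Cₙ₊₂]`. -/
noncomputable def bSeq (φ : MulAut G) (U : Subgroup G) (n : ℕ) : ℕ :=
  (cotrajN φ U (n + 2)).relIndex (cotrajN φ U (n + 1))

lemma isCompact_cotrajN_succ (hφ : Continuous φ) (hUo : IsOpen (U : Set G))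
    (hUc : IsCompact (U : Set G)) (n : ℕ) : IsCompact ((cotrajN φ U (n + 1) : Set G)) := by
  refine IsCompact.of_isClosed_subset hUc
    (Subgroup.isClosed_of_isOpen _ (isOpen_cotrajN hφ hUo (n + 1))) ?_
  exact_mod_cast cotrajN_succ_le

lemma bSeq_ne_zero (hφ : Continuous φ) (hUo : IsOpen (U : Set G))
    (hUc : IsCompact (U : Set G)) (n : ℕ) : bSeq φ U n ≠ 0 :=
  relIndex_ne_zero_aux (isOpen_cotrajN hφ hUo (n + 2)) (isCompact_cotrajN_succ hφ hUo hUc n)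

lemma bSeq_succ_le (hφ : Continuous φ) (hUo : IsOpen (U : Set G))
    (hUc : IsCompact (U : Set G)) (n : ℕ) : bSeq φ U (n + 1) ≤ bSeq φ U n := by
  have h1 : bSeq φ U (n + 1)
      = (Subgroup.comap φ.toMonoidHom (cotrajN φ U (n + 2))).relIndex (cotrajN φ U (n + 2)) := by
    rw [bSeq, cotrajN_succ_comap (n + 1), Subgroup.inf_relIndex_right]
  rw [h1, Subgroup.relIndex_comap]
  exact Subgroup.relIndex_le_of_le_right (map_cotrajN_le n) (bSeq_ne_zero hφ hUo hUc n)

lemma entIdx_succ_succ (n : ℕ) :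
    entIdx φ U (n + 2) = bSeq φ U n * entIdx φ U (n + 1) :=
  (Subgroup.relIndex_mul_relIndex _ _ _ (cotrajN_anti (by omega)) cotrajN_succ_le).symm

end Top

section Tendsto

variable [TopologicalSpace G] [IsTopologicalGroup G]
variable {φ : MulAut G} {U : Subgroup G}

lemma tendsto_aux (K L c : ℝ) (hc : 0 < c) :
    Tendsto (fun n : ℕ => (K + n * L) / (n + c)) atTop (𝓝 L) := by
  have h1 : Tendsto (fun n : ℕ => ((n : ℝ) + c)) atTop atTop :=
    tendsto_atTop_add_const_right atTop c tendsto_natCast_atTop_atTop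
  have h0 : Tendsto (fun n : ℕ => ((n : ℝ) + c)⁻¹) atTop (𝓝 0) := h1.inv_tendsto_atTop
  have h2 : Tendsto (fun n : ℕ => L + (K - c * L) * ((n : ℝ) + c)⁻¹) atTop (𝓝 L) := by
    have := (tendsto_const_nhds : Tendsto (fun _ : ℕ => L) atTop (𝓝 L)).add
      (h0.const_mul (K - c * L))
    simpa using this
  refine h2.congr' (Filter.Eventually.of_forall fun n => ?_)
  have hne : (n : ℝ) + c ≠ 0 := by positivity
  field_simp
  ring

lemma exists_tendsto (hφ : Continuous φ) (hUo : IsOpen (U : Set G))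
    (hUc : IsCompact (U : Set G)) :
    ∃ L : ℝ, Tendsto (fun n : ℕ => Real.log (entIdx φ U n) / n) atTop (𝓝 L) := by
  -- the decreasing sequence of step indices is eventually constant
  have hanti : ∀ m n, m ≤ n → bSeq φ U n ≤ bSeq φ U m := by
    intro m n h
    induction n with
    | zero => simp_all
    | succ n ih =>
        rcases Nat.eq_or_lt_of_le h with rfl | h'
        · exact le_rfl
        · exact le_trans (bSeq_succ_le hφ hUo hUc n) (ih (by omega))
  obtain ⟨N, hN⟩ : ∃ N, ∀ n, N ≤ n → bSeq φ U n = bSeq φ U N := by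
    have hne : (Set.range (bSeq φ U)).Nonempty := ⟨_, ⟨0, rfl⟩⟩
    obtain ⟨N, hNmem⟩ : sInf (Set.range (bSeq φ U)) ∈ Set.range (bSeq φ U) :=
      Nat.sInf_mem hne
    refine ⟨N, fun n hn => le_antisymm (hanti _ _ hn) ?_⟩
    calc bSeq φ U N = sInf (Set.range (bSeq φ U)) := hNmem
      _ ≤ bSeq φ U n := Nat.sInf_le ⟨n, rfl⟩
  set a := bSeq φ U N with ha
  have hane : a ≠ 0 := bSeq_ne_zero hφ hUo hUc N
  -- geometric growth from N+1 on
  have hgeom : ∀ n, entIdx φ U (N + 1 + n) = entIdx φ U (N + 1) * a ^ n := by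
    intro n
    induction n with
    | zero => simp
    | succ n ih =>
        have h1 : N + 1 + (n + 1) = (N + n) + 2 := by omega
        have h2 : N + 1 + n = (N + n) + 1 := by omega
        rw [h1, entIdx_succ_succ, hN (N + n) (by omega), ← h2, ih]
        ring
  refine ⟨Real.log a, ?_⟩
  rw [← Filter.tendsto_add_atTop_iff_nat (N + 1)]
  have hc0 : ((entIdx φ U (N + 1) : ℕ) : ℝ) ≠ 0 := by
    exact_mod_cast entIdx_ne_zero hφ hUo hUc (N + 1)
  have ha0 : ((a : ℕ) : ℝ) ≠ 0 := by exact_mod_cast hane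
  refine (tendsto_aux (Real.log (entIdx φ U (N + 1))) (Real.log a) ((N : ℝ) + 1)
    (by positivity)).congr fun n => ?_
  rw [show n + (N + 1) = N + 1 + n from by omega, hgeom n]
  have hcast : ((entIdx φ U (N + 1) * a ^ n : ℕ) : ℝ)
      = ((entIdx φ U (N + 1) : ℕ) : ℝ) * ((a : ℕ) : ℝ) ^ n := by push_cast; ring
  rw [hcast, Real.log_mul hc0 (pow_ne_zero n ha0), Real.log_pow]
  push_cast
  ring_nf

lemma tendsto_Htop (hφ : Continuous φ) (hUo : IsOpen (U : Set G))
    (hUc : IsCompact (U : Set G)) :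
    Tendsto (fun n : ℕ => Real.log (entIdx φ U n) / n) atTop (𝓝 (Htop φ U)) := by
  obtain ⟨L, hL⟩ := exists_tendsto hφ hUo hUc
  rwa [Htop, hL.limsup_eq]

end Tendsto

section Anti

variable [TopologicalSpace G] [IsTopologicalGroup G] {φ : MulAut G}

lemma entIdx_le_mul {P W : Subgroup G} (hφ : Continuous φ) (hPo : IsOpen (P : Set G))
    (hWc : IsCompact (W : Set G)) (hPW : P ≤ W) (m : ℕ) :
    entIdx φ W (m + 1) ≤ entIdx φ P (m + 1) * P.relIndex W := by
  have h1 : cotrajN φ P (m + 1) ≤ cotrajN φ W (m + 1) := cotrajN_mono_U hPW _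
  have h2 : (cotrajN φ P (m + 1)).relIndex W ≠ 0 :=
    relIndex_ne_zero_aux (isOpen_cotrajN hφ hPo _) hWc
  calc entIdx φ W (m + 1) ≤ (cotrajN φ P (m + 1)).relIndex W :=
        Subgroup.relIndex_le_of_le_left h1 h2
    _ = entIdx φ P (m + 1) * P.relIndex W :=
        (Subgroup.relIndex_mul_relIndex _ _ _ cotrajN_succ_le hPW).symm

lemma Htop_anti (hφ : Continuous φ) {P W : Subgroup G}
    (hPo : IsOpen (P : Set G)) (hPc : IsCompact (P : Set G))
    (hWo : IsOpen (W : Set G)) (hWc : IsCompact (W : Set G)) (hPW : P ≤ W) :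
    Htop φ W ≤ Htop φ P := by
  have hP := tendsto_Htop hφ hPo hPc
  have hW := tendsto_Htop hφ hWo hWc
  set r := P.relIndex W with hr_def
  have hr : r ≠ 0 := relIndex_ne_zero_aux hPo hWc
  have h2 : Tendsto (fun n : ℕ => Real.log (entIdx φ P n) / n + Real.log r / n) atTop
      (𝓝 (Htop φ P + 0)) := hP.add (tendsto_const_div_atTop_nhds_zero_nat _)
  have hle : ∀ n : ℕ, Real.log (entIdx φ W n) / n ≤
      Real.log (entIdx φ P n) / n + Real.log r / n := by
    intro n
    match n with
    | 0 => simp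
    | (m + 1) =>
      rw [← add_div]
      have hposW : (0 : ℝ) < (entIdx φ W (m + 1) : ℝ) := by
        have := entIdx_ne_zero hφ hWo hWc (m + 1)
        positivity
      have hP0 : ((entIdx φ P (m + 1) : ℕ) : ℝ) ≠ 0 := by
        exact_mod_cast entIdx_ne_zero hφ hPo hPc (m + 1)
      have hr0 : ((r : ℕ) : ℝ) ≠ 0 := by exact_mod_cast hr
      have key : (entIdx φ W (m + 1) : ℝ) ≤ (entIdx φ P (m + 1) : ℝ) * (r : ℝ) := by
        exact_mod_cast entIdx_le_mul hφ hPo hWc hPW m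
      have hlog : Real.log (entIdx φ W (m + 1)) ≤
          Real.log (entIdx φ P (m + 1)) + Real.log r := by
        rw [← Real.log_mul hP0 hr0]
        exact Real.log_le_log hposW key
      have hden : (0 : ℝ) < ((m + 1 : ℕ) : ℝ) := by positivity
      exact (div_le_div_iff_of_pos_right hden).mpr hlog
  have := le_of_tendsto_of_tendsto' hW h2 hle
  simpa using this

end Anti

section Prod

variable {H : Type*} [Group H]

lemma prodCongr_apply (φ : MulAut G) (ψ : MulAut H) (x : G × H) :
    (φ.prodCongr ψ) x = (φ x.1, ψ x.2) := rfl

lemma prodCongr_pow_apply (φ : MulAut G) (ψ : MulAut H) (i : ℕ) (x : G × H) :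
    ((φ.prodCongr ψ) ^ i) x = ((φ ^ i) x.1, (ψ ^ i) x.2) := by
  induction i generalizing x with
  | zero => simp
  | succ n ih =>
      rw [pow_succ_apply, prodCongr_apply, ih (φ x.1, ψ x.2), pow_succ_apply, pow_succ_apply]

lemma cotrajN_prod (φ : MulAut G) (ψ : MulAut H) (U : Subgroup G) (V : Subgroup H) (n : ℕ) :
    cotrajN (φ.prodCongr ψ) (U.prod V) n = (cotrajN φ U n).prod (cotrajN ψ V n) := by
  ext x
  simp only [mem_cotrajN, Subgroup.mem_prod, prodCongr_pow_apply]
  exact ⟨fun h => ⟨fun i hi => (h i hi).1, fun i hi => (h i hi).2⟩,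
    fun h i hi => ⟨h.1 i hi, h.2 i hi⟩⟩

lemma relIndex_prod (A U : Subgroup G) (B V : Subgroup H) :
    (A.prod B).relIndex (U.prod V) = A.relIndex U * B.relIndex V := by
  let f : (U.prod V) →* U × V :=
    { toFun := fun x => (⟨x.1.1, (Subgroup.mem_prod.mp x.2).1⟩,
        ⟨x.1.2, (Subgroup.mem_prod.mp x.2).2⟩),
      map_one' := rfl,
      map_mul' := fun _ _ => rfl }
  have hf : Function.Surjective f := by
    rintro ⟨u, v⟩
    exact ⟨⟨(u.1, v.1), Subgroup.mem_prod.mpr ⟨u.2, v.2⟩⟩, rfl⟩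
  have he : (A.prod B).subgroupOf (U.prod V)
      = Subgroup.comap f ((A.subgroupOf U).prod (B.subgroupOf V)) := by
    ext x
    simp [Subgroup.mem_subgroupOf, Subgroup.mem_comap, Subgroup.mem_prod, f]
  rw [Subgroup.relIndex, Subgroup.relIndex, Subgroup.relIndex, he,
    Subgroup.index_comap_of_surjective _ hf, Subgroup.index_prod]

lemma entIdx_prod (φ : MulAut G) (ψ : MulAut H) (U : Subgroup G) (V : Subgroup H) (n : ℕ) :
    entIdx (φ.prodCongr ψ) (U.prod V) n = entIdx φ U n * entIdx ψ V n := by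
  rw [entIdx, entIdx, entIdx, cotrajN_prod, relIndex_prod]

variable [TopologicalSpace G] [IsTopologicalGroup G] [TopologicalSpace H] [IsTopologicalGroup H]

lemma Htop_prod {φ : MulAut G} {ψ : MulAut H} {U : Subgroup G} {V : Subgroup H}
    (hφ : Continuous φ) (hψ : Continuous ψ)
    (hUo : IsOpen (U : Set G)) (hUc : IsCompact (U : Set G))
    (hVo : IsOpen (V : Set H)) (hVc : IsCompact (V : Set H)) :
    Htop (φ.prodCongr ψ) (U.prod V) = Htop φ U + Htop ψ V := by
  have hG := tendsto_Htop hφ hUo hUc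
  have hHt := tendsto_Htop hψ hVo hVc
  have hsum := hG.add hHt
  have hT : Tendsto (fun n : ℕ => Real.log (entIdx (φ.prodCongr ψ) (U.prod V) n) / n) atTop
      (𝓝 (Htop φ U + Htop ψ V)) := by
    refine hsum.congr fun n => ?_
    rw [entIdx_prod]
    have hU0 : ((entIdx φ U n : ℕ) : ℝ) ≠ 0 := by
      exact_mod_cast entIdx_ne_zero hφ hUo hUc n
    have hV0 : ((entIdx ψ V n : ℕ) : ℝ) ≠ 0 := by
      exact_mod_cast entIdx_ne_zero hψ hVo hVc n
    have hcast : ((entIdx φ U n * entIdx ψ V n : ℕ) : ℝ)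
        = ((entIdx φ U n : ℕ) : ℝ) * ((entIdx ψ V n : ℕ) : ℝ) := by push_cast; ring
    rw [hcast, Real.log_mul hU0 hV0, add_div]
  rw [Htop, hT.limsup_eq]

end Prod

end EntropyAux

open EntropyAux in
theorem weak_addition_theorem {H : Type*} [Group H]
    [TopologicalSpace G] [IsTopologicalGroup G] [LocallyCompactSpace G] [TotallyDisconnectedSpace G]
    [TopologicalSpace H] [IsTopologicalGroup H] [LocallyCompactSpace H] [TotallyDisconnectedSpace H]
    (φ : MulAut G) (hφ : Continuous φ) (hφ' : Continuous φ⁻¹)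
    (ψ : MulAut H) (hψ : Continuous ψ) (hψ' : Continuous ψ⁻¹) :
    htop (φ.prodCongr ψ) = htop φ + htop ψ := by
  have hcont : Continuous ⇑(φ.prodCongr ψ) := by
    have heq : ⇑(φ.prodCongr ψ) = fun p : G × H => (φ p.1, ψ p.2) := rfl
    rw [heq]
    exact (hφ.comp continuous_fst).prodMk (hψ.comp continuous_snd)
  apply le_antisymm
  · -- htop (φ × ψ) ≤ htop φ + htop ψ
    refine iSup_le fun W => iSup_le fun hW => ?_
    -- the slices of W
    set A : Subgroup G := W.comap (MonoidHom.inl G H) with hA_def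
    set B : Subgroup H := W.comap (MonoidHom.inr G H) with hB_def
    have hinl : Continuous (⇑(MonoidHom.inl G H)) := continuous_id.prodMk continuous_const
    have hinr : Continuous (⇑(MonoidHom.inr G H)) := continuous_const.prodMk continuous_id
    have hAo : IsOpen (A : Set G) := by
      rw [hA_def, Subgroup.coe_comap]; exact hW.1.preimage hinl
    have hBo : IsOpen (B : Set H) := by
      rw [hB_def, Subgroup.coe_comap]; exact hW.1.preimage hinr
    have hsingH : IsClosed ({1} : Set H) := by
      have h1 := (totallyDisconnectedSpace_iff_connectedComponent_singleton.mp
        ‹TotallyDisconnectedSpace H› (1 : H))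
      rw [← h1]; exact isClosed_connectedComponent
    have hsingG : IsClosed ({1} : Set G) := by
      have h1 := (totallyDisconnectedSpace_iff_connectedComponent_singleton.mp
        ‹TotallyDisconnectedSpace G› (1 : G))
      rw [← h1]; exact isClosed_connectedComponent
    have hAc : IsCompact (A : Set G) := by
      have himg : (A : Set G) = Prod.fst '' ((W : Set (G × H)) ∩ (Prod.snd ⁻¹' {1})) := by
        ext g
        constructor
        · intro hg
          exact ⟨(g, 1), ⟨hg, rfl⟩, rfl⟩
        · rintro ⟨⟨g', h'⟩, ⟨hmem, hh⟩, rfl⟩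
          have hh' : h' = 1 := hh
          show (g', (1 : H)) ∈ W
          rw [← hh']; exact hmem
      rw [himg]
      exact ((hW.2.inter_right (hsingH.preimage continuous_snd)).image continuous_fst)
    have hBc : IsCompact (B : Set H) := by
      have himg : (B : Set H) = Prod.snd '' ((W : Set (G × H)) ∩ (Prod.fst ⁻¹' {1})) := by
        ext h
        constructor
        · intro hh
          exact ⟨(1, h), ⟨hh, rfl⟩, rfl⟩
        · rintro ⟨⟨g', h'⟩, ⟨hmem, hg⟩, rfl⟩
          have hg' : g' = 1 := hg
          show ((1 : G), h') ∈ W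
          rw [← hg']; exact hmem
      rw [himg]
      exact ((hW.2.inter_right (hsingG.preimage continuous_fst)).image continuous_snd)
    have hABW : A.prod B ≤ W := by
      rintro ⟨g, h⟩ hx
      obtain ⟨hg, hh⟩ := Subgroup.mem_prod.mp hx
      have hmul := mul_mem (show ((g, (1 : H)) : G × H) ∈ W from hg)
        (show (((1 : G), h) : G × H) ∈ W from hh)
      simpa using hmul
    have hABo : IsOpen ((A.prod B : Subgroup (G × H)) : Set (G × H)) := by
      rw [Subgroup.coe_prod]; exact hAo.prod hBo
    have hABc : IsCompact ((A.prod B : Subgroup (G × H)) : Set (G × H)) := by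
      rw [Subgroup.coe_prod]; exact hAc.prod hBc
    have h1 : Htop (φ.prodCongr ψ) W ≤ Htop (φ.prodCongr ψ) (A.prod B) :=
      Htop_anti hcont hABo hABc hW.1 hW.2 hABW
    have h2 : Htop (φ.prodCongr ψ) (A.prod B) = Htop φ A + Htop ψ B :=
      Htop_prod hφ hψ hAo hAc hBo hBc
    calc ((Htop (φ.prodCongr ψ) W : ℝ) : EReal)
        ≤ ((Htop φ A + Htop ψ B : ℝ) : EReal) := by
          exact_mod_cast (h1.trans h2.le)
      _ = ((Htop φ A : ℝ) : EReal) + ((Htop ψ B : ℝ) : EReal) := EReal.coe_add _ _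
      _ ≤ htop φ + htop ψ := by
          refine add_le_add ?_ ?_
          · exact le_iSup_of_le A (le_iSup_of_le ⟨hAo, hAc⟩ le_rfl)
          · exact le_iSup_of_le B (le_iSup_of_le ⟨hBo, hBc⟩ le_rfl)
  · -- htop φ + htop ψ ≤ htop (φ × ψ)
    refine EReal.add_le_of_forall_lt fun a ha b hb => ?_
    simp only [htop, lt_iSup_iff] at ha hb
    obtain ⟨U, ⟨hUo, hUc⟩, ha⟩ := ha
    obtain ⟨V, ⟨hVo, hVc⟩, hb⟩ := hb
    have hABo : IsOpen ((U.prod V : Subgroup (G × H)) : Set (G × H)) := by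
      rw [Subgroup.coe_prod]; exact hUo.prod hVo
    have hABc : IsCompact ((U.prod V : Subgroup (G × H)) : Set (G × H)) := by
      rw [Subgroup.coe_prod]; exact hUc.prod hVc
    calc a + b ≤ ((Htop φ U : ℝ) : EReal) + ((Htop ψ V : ℝ) : EReal) := add_le_add ha.le hb.le
      _ = ((Htop φ U + Htop ψ V : ℝ) : EReal) := (EReal.coe_add _ _).symm
      _ = ((Htop (φ.prodCongr ψ) (U.prod V) : ℝ) : EReal) := by
          rw [Htop_prod hφ hψ hUo hUc hVo hVc]
      _ ≤ htop (φ.prodCongr ψ) :=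
          le_iSup_of_le (U.prod V) (le_iSup_of_le ⟨hABo, hABc⟩ le_rfl)
end
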